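/- In a firm braided monoidal category, idempotent subunits s ≤ t in the subobject ordering (s factors through t) if and only if the subobjects represented by s and by λ_I ∘ (s ⊗ t) are equal. Consequently, the idempotent subunits form a meet-semilattice where the meet of s and t is λ_I ∘ (s ⊗ t) and the top element is id_I. -/

import Mathlib

open CategoryTheory MonoidalCategory

/-- A braided monoidal category is *firm* when `s ⊗ₘ id_T` is monic for all idempotent
subunits `s : S ↪ I` and `t : T ↪ I`. -/
def Firm (C : Type*) [Category C] [MonoidalCategory C] [BraidedCategory C] : Prop :=
  ∀ {S T : C} (s : S ⟶ 𝟙_ C) (t : T ⟶ 𝟙_ C), Mono s → Mono t →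
    IsIso (s ⊗ₘ 𝟙 S) → IsIso (t ⊗ₘ 𝟙 T) → Mono (s ⊗ₘ 𝟙 T)

/-- `s : S ↪ I` is an idempotent subunit. -/
def IsIdemSubunit {C : Type*} [Category C] [MonoidalCategory C] {S : C}
    (s : S ⟶ 𝟙_ C) : Prop :=
  Mono s ∧ IsIso (s ⊗ₘ 𝟙 S)

/-- The subobject order: `s ≤ t` iff `s` factors through `t`. -/
def SubLe {C : Type*} [Category C] [MonoidalCategory C] {S T : C}
    (s : S ⟶ 𝟙_ C) (t : T ⟶ 𝟙_ C) : Prop :=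
  ∃ f : S ⟶ T, s = f ≫ t

/-- Two morphisms into `I` represent the same subobject of `I`. -/
def SameSub {C : Type*} [Category C] [MonoidalCategory C] {S T : C}
    (s : S ⟶ 𝟙_ C) (t : T ⟶ 𝟙_ C) : Prop :=
  SubLe s t ∧ SubLe t s

/-- The product of subunits `s, t`: `λ_I ∘ (s ⊗ₘ t) : S ⊗ T → I`. -/
def subunitMul {C : Type*} [Category C] [MonoidalCategory C] {S T : C}
    (s : S ⟶ 𝟙_ C) (t : T ⟶ 𝟙_ C) : S ⊗ T ⟶ 𝟙_ C :=
  (s ⊗ₘ t) ≫ (λ_ (𝟙_ C)).hom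

section Aux

variable {C : Type*} [Category C] [MonoidalCategory C] [BraidedCategory C]

/-- `subunitMul s t` factors through `t`. -/
lemma subunitMul_le_right {S T : C} (s : S ⟶ 𝟙_ C) (t : T ⟶ 𝟙_ C) :
    SubLe (subunitMul s t) t := by
  refine ⟨(s ⊗ₘ 𝟙 T) ≫ (λ_ T).hom, ?_⟩
  have h : (𝟙 (𝟙_ C) ⊗ₘ t) ≫ (λ_ (𝟙_ C)).hom = (λ_ T).hom ≫ t := by
    rw [id_tensorHom]; exact leftUnitor_naturality t
  calc subunitMul s t = (s ⊗ₘ 𝟙 T) ≫ (𝟙 (𝟙_ C) ⊗ₘ t) ≫ (λ_ (𝟙_ C)).hom := by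
        rw [subunitMul, ← Category.assoc, tensorHom_comp_tensorHom, Category.comp_id, Category.id_comp]
    _ = (s ⊗ₘ 𝟙 T) ≫ (λ_ T).hom ≫ t := by rw [h]
    _ = ((s ⊗ₘ 𝟙 T) ≫ (λ_ T).hom) ≫ t := by rw [Category.assoc]

/-- `subunitMul s t` factors through `s`. -/
lemma subunitMul_le_left {S T : C} (s : S ⟶ 𝟙_ C) (t : T ⟶ 𝟙_ C) :
    SubLe (subunitMul s t) s := by
  refine ⟨(𝟙 S ⊗ₘ t) ≫ (ρ_ S).hom, ?_⟩
  have h : (s ⊗ₘ 𝟙 (𝟙_ C)) ≫ (ρ_ (𝟙_ C)).hom = (ρ_ S).hom ≫ s := by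
    rw [tensorHom_id]; exact rightUnitor_naturality s
  calc subunitMul s t = (𝟙 S ⊗ₘ t) ≫ (s ⊗ₘ 𝟙 (𝟙_ C)) ≫ (ρ_ (𝟙_ C)).hom := by
        rw [subunitMul, ← Category.assoc, tensorHom_comp_tensorHom, Category.comp_id, Category.id_comp,
          unitors_equal]
    _ = (𝟙 S ⊗ₘ t) ≫ (ρ_ S).hom ≫ s := by rw [h]
    _ = ((𝟙 S ⊗ₘ t) ≫ (ρ_ S).hom) ≫ s := by rw [Category.assoc]

/-- If `r` is an idempotent subunit with `r ≤ s` and `r ≤ t`, then `r ≤ subunitMul s t`. -/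
lemma le_subunitMul {R S T : C} (r : R ⟶ 𝟙_ C) (s : S ⟶ 𝟙_ C) (t : T ⟶ 𝟙_ C)
    (hr : IsIdemSubunit r) (hs : SubLe r s) (ht : SubLe r t) :
    SubLe r (subunitMul s t) := by
  obtain ⟨f, hf⟩ := hs
  obtain ⟨g, hg⟩ := ht
  haveI := hr.2
  have e : IsIso ((r ⊗ₘ 𝟙 R) ≫ (λ_ R).hom) := inferInstance
  refine ⟨inv ((r ⊗ₘ 𝟙 R) ≫ (λ_ R).hom) ≫ (f ⊗ₘ g), ?_⟩
  have key : (f ⊗ₘ g) ≫ subunitMul s t = ((r ⊗ₘ 𝟙 R) ≫ (λ_ R).hom) ≫ r := by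
    have h1 : (f ⊗ₘ g) ≫ (s ⊗ₘ t) = r ⊗ₘ r := by
      rw [tensorHom_comp_tensorHom, ← hf, ← hg]
    have h2 : (𝟙 (𝟙_ C) ⊗ₘ r) ≫ (λ_ (𝟙_ C)).hom = (λ_ R).hom ≫ r := by
      rw [id_tensorHom]; exact leftUnitor_naturality r
    calc (f ⊗ₘ g) ≫ subunitMul s t = (r ⊗ₘ r) ≫ (λ_ (𝟙_ C)).hom := by
          rw [subunitMul, ← Category.assoc, h1]
      _ = (r ⊗ₘ 𝟙 R) ≫ (𝟙 (𝟙_ C) ⊗ₘ r) ≫ (λ_ (𝟙_ C)).hom := by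
          rw [← Category.assoc, tensorHom_comp_tensorHom, Category.comp_id, Category.id_comp]
      _ = (r ⊗ₘ 𝟙 R) ≫ (λ_ R).hom ≫ r := by rw [h2]
      _ = ((r ⊗ₘ 𝟙 R) ≫ (λ_ R).hom) ≫ r := by rw [Category.assoc]
  rw [Category.assoc, key, ← Category.assoc, IsIso.inv_hom_id, Category.id_comp]

lemma mono_id_tensor {T : C} (t : T ⟶ 𝟙_ C) (ht : Mono t) :
    Mono (𝟙 (𝟙_ C) ⊗ₘ t) := by
  haveI := ht
  have h : (𝟙 (𝟙_ C) ⊗ₘ t) = ((λ_ T).hom ≫ t) ≫ (λ_ (𝟙_ C)).inv := by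
    rw [Iso.eq_comp_inv, id_tensorHom]; exact leftUnitor_naturality t
  rw [h]
  exact mono_comp _ _

lemma isIso_tensorμ (X₁ X₂ Y₁ Y₂ : C) : IsIso (tensorμ X₁ X₂ Y₁ Y₂) := by
  unfold tensorμ; infer_instance

/-- `subunitMul s t` is an idempotent subunit (firmness used for mono). -/
lemma isIdemSubunit_subunitMul (firm : Firm C) {S T : C} (s : S ⟶ 𝟙_ C) (t : T ⟶ 𝟙_ C)
    (hs : IsIdemSubunit s) (ht : IsIdemSubunit t) :
    IsIdemSubunit (subunitMul s t) := by
  constructor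
  · -- mono
    haveI hst : Mono (s ⊗ₘ 𝟙 T) := firm s t hs.1 ht.1 hs.2 ht.2
    haveI h2 : Mono (𝟙 (𝟙_ C) ⊗ₘ t) := mono_id_tensor t ht.1
    have h : subunitMul s t = (s ⊗ₘ 𝟙 T) ≫ (𝟙 (𝟙_ C) ⊗ₘ t) ≫ (λ_ (𝟙_ C)).hom := by
      rw [subunitMul, ← Category.assoc, tensorHom_comp_tensorHom, Category.comp_id, Category.id_comp]
    rw [h]
    exact mono_comp _ _
  · -- iso after tensoring
    haveI := hs.2; haveI := ht.2
    haveI := isIso_tensorμ S T S T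
    haveI := isIso_tensorμ (𝟙_ C) (𝟙_ C) S T
    have hnat := tensorμ_natural (C := C) s t (𝟙 S) (𝟙 T)
    have h1 : ((s ⊗ₘ t) ⊗ₘ (𝟙 S ⊗ₘ 𝟙 T)) =
        (tensorμ S T S T ≫ ((s ⊗ₘ 𝟙 S) ⊗ₘ (t ⊗ₘ 𝟙 T))) ≫ inv (tensorμ (𝟙_ C) (𝟙_ C) S T) := by
      rw [← hnat, Category.assoc, IsIso.hom_inv_id, Category.comp_id]
    have h2 : subunitMul s t ⊗ₘ 𝟙 (S ⊗ T) =
        ((s ⊗ₘ t) ⊗ₘ (𝟙 S ⊗ₘ 𝟙 T)) ≫ ((λ_ (𝟙_ C)).hom ⊗ₘ 𝟙 (S ⊗ T)) := by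
      rw [subunitMul, tensorHom_comp_tensorHom, id_tensorHom_id, Category.comp_id]
    rw [h2, h1]
    infer_instance

end Aux

/-- In a firm braided monoidal category, `s ≤ t` in the subobject ordering iff `s` and
`λ_I ∘ (s ⊗ₘ t)` represent the same subobject; consequently the idempotent subunits form
a meet-semilattice with meet `λ_I ∘ (s ⊗ₘ t)` and top `id_I`. -/
theorem stmt5 {C : Type*} [Category C] [MonoidalCategory C] [BraidedCategory C]
    (firm : Firm C) :
    -- characterisation of the order
    (∀ {S T : C} (s : S ⟶ 𝟙_ C) (t : T ⟶ 𝟙_ C),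
      IsIdemSubunit s → IsIdemSubunit t → (SubLe s t ↔ SameSub s (subunitMul s t))) ∧
    -- `subunitMul s t` is the meet of `s` and `t` among idempotent subunits
    (∀ {S T : C} (s : S ⟶ 𝟙_ C) (t : T ⟶ 𝟙_ C),
      IsIdemSubunit s → IsIdemSubunit t →
      IsIdemSubunit (subunitMul s t) ∧
      SubLe (subunitMul s t) s ∧ SubLe (subunitMul s t) t ∧
      (∀ {R : C} (r : R ⟶ 𝟙_ C), IsIdemSubunit r →
        SubLe r s → SubLe r t → SubLe r (subunitMul s t))) ∧
    -- `id_I` is the top element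
    (∀ {S : C} (s : S ⟶ 𝟙_ C), IsIdemSubunit s → SubLe s (𝟙 (𝟙_ C))) := by
  refine ⟨?_, ?_, ?_⟩
  · intro S T s t hs ht
    constructor
    · intro hle
      exact ⟨le_subunitMul s s t hs ⟨𝟙 S, (Category.id_comp s).symm⟩ hle,
        subunitMul_le_left s t⟩
    · rintro ⟨⟨g, hg⟩, -⟩
      obtain ⟨f, hf⟩ := subunitMul_le_right s t
      exact ⟨g ≫ f, by rw [Category.assoc, ← hf, ← hg]⟩
  · intro S T s t hs ht
    exact ⟨isIdemSubunit_subunitMul firm s t hs ht, subunitMul_le_left s t,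
      subunitMul_le_right s t, fun r hr h1 h2 => le_subunitMul r s t hr h1 h2⟩
  · intro S s hs
    exact ⟨s, (Category.comp_id s).symm⟩
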